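/- If X is a Banach space such that ℓ∞(X) contains an isomorphic copy of c₀(ω₂), then X itself contains an isomorphic copy of c₀(ω₂). -/

import Mathlib

open Filter Set
open scoped ZeroAtInfty

noncomputable section

abbrev LinfSeq : Type := lp (fun _ : ℕ => ℝ) ⊤

def c0Null : Submodule ℝ LinfSeq where
  carrier := {x | Tendsto (fun n => x n) atTop (nhds (0 : ℝ))}
  add_mem' := by
    intro x y hx hy
    simpa [lp.coeFn_add] using hx.add hy
  zero_mem' := by
    simpa [lp.coeFn_zero] using (tendsto_const_nhds : Tendsto (fun _ : ℕ => (0:ℝ)) atTop (nhds 0))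
  smul_mem' := by
    intro c x hx
    have h := hx.const_mul c
    simpa [lp.coeFn_smul, smul_eq_mul] using h

abbrev LinfModC0 : Type := LinfSeq ⧸ c0Null

/-- `y ∈ ℓ∞/c₀` is constantly `r` on the clopen set `[E]*` of `ℕ*`. -/
def ConstOnStar (E : Set ℕ) (r : ℝ) (y : LinfModC0) : Prop :=
  ∃ x : LinfSeq, Submodule.Quotient.mk x = y ∧
    Tendsto (fun n => x n) (atTop ⊓ 𝓟 E) (nhds r)

section c0
variable (Γ : Type) [TopologicalSpace Γ] [DiscreteTopology Γ]

def c0Ind (s : Set Γ) (hs : s.Finite) : C₀(Γ, ℝ) where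
  toFun := s.indicator 1
  continuous_toFun := continuous_of_discreteTopology
  zero_at_infty' := by
    have h : ∀ᶠ γ in cocompact Γ, γ ∉ s := by
      rw [cocompact_eq_cofinite]; exact hs.eventually_cofinite_notMem
    exact tendsto_const_nhds.congr' (h.mono fun γ hγ => (Set.indicator_of_notMem hγ 1).symm)

theorem c0Ind_norm_le (s : Set Γ) (hs : s.Finite) : ‖c0Ind Γ s hs‖ ≤ 1 := by
  rw [← ZeroAtInftyContinuousMap.norm_toBCF_eq_norm]
  refine (BoundedContinuousFunction.norm_le zero_le_one).2 fun γ => ?_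
  by_cases h : γ ∈ s <;> simp [c0Ind, Set.indicator_apply, h]

abbrev LinfC0 : Type := lp (fun _ : ℕ => C₀(Γ, ℝ)) ⊤

def IsPartialFun (σ : Set (ℕ × Γ)) : Prop :=
  ∀ ⦃n : ℕ⦄ ⦃β β' : Γ⦄, (n, β) ∈ σ → (n, β') ∈ σ → β = β'

theorem fiber_finite {σ : Set (ℕ × Γ)} (hσ : IsPartialFun Γ σ) (n : ℕ) :
    {β : Γ | (n, β) ∈ σ}.Finite :=
  Set.Subsingleton.finite fun β hβ β' hβ' => hσ hβ hβ'

/-- `1_σ ∈ ℓ∞(c₀(Γ))`, the indicator of the graph of a partial function `σ`. -/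
def oneGraph (σ : Set (ℕ × Γ)) (hσ : IsPartialFun Γ σ) : LinfC0 Γ :=
  ⟨fun n => c0Ind Γ {β : Γ | (n, β) ∈ σ} (fiber_finite Γ hσ n), by
    apply memℓp_infty
    refine ⟨1, ?_⟩
    rintro - ⟨n, rfl⟩
    exact c0Ind_norm_le Γ _ _⟩

theorem isPartialFun_graph (σ : ℕ → Γ) : IsPartialFun Γ {p : ℕ × Γ | σ p.1 = p.2} := by
  rintro n β β' h h'
  simp only [Set.mem_setOf_eq] at h h'
  exact h.symm.trans h'

/-- `1_σ` for a total function `σ : ℕ → Γ`. -/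
def oneFun (σ : ℕ → Γ) : LinfC0 Γ :=
  oneGraph Γ {p : ℕ × Γ | σ p.1 = p.2} (isPartialFun_graph Γ σ)

theorem isPartialFun_single (n : ℕ) (α : Γ) : IsPartialFun Γ {(n, α)} := by
  rintro m β β' h h'
  simp only [Set.mem_singleton_iff, Prod.mk.injEq] at h h'
  exact h.2.trans h'.2.symm

/-- `1_{n,α}`, the indicator of `{(n,α)}`. -/
def onePt (n : ℕ) (α : Γ) : LinfC0 Γ :=
  oneGraph Γ {(n, α)} (isPartialFun_single Γ n α)

end c0

section Banach
variable (Y : Type) [NormedAddCommGroup Y] [NormedSpace ℝ Y]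

abbrev LinfB : Type := lp (fun _ : ℕ => Y) ⊤

def c0NullB : Submodule ℝ (LinfB Y) where
  carrier := {x | Tendsto (fun n => x n) atTop (nhds (0 : Y))}
  add_mem' := by
    intro x y hx hy
    simpa [lp.coeFn_add] using hx.add hy
  zero_mem' := by
    simpa [lp.coeFn_zero] using (tendsto_const_nhds : Tendsto (fun _ : ℕ => (0:Y)) atTop (nhds 0))
  smul_mem' := by
    intro c x hx
    have h := hx.const_smul c
    simpa [lp.coeFn_smul] using h

abbrev LinfModC0B : Type := LinfB Y ⧸ c0NullB Y

end Banach



section Aux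
open Cardinal

lemma aleph2_regular : Cardinal.IsRegular (Cardinal.aleph 2) := by
  have : (2 : Ordinal) = Order.succ 1 := by
    rw [Order.succ_eq_add_one]; norm_num
  rw [this]
  exact Cardinal.isRegular_aleph_succ 1

lemma aleph0_lt_aleph2 : ℵ₀ < Cardinal.aleph 2 := by
  rw [← Cardinal.aleph_zero]
  exact Cardinal.aleph_lt_aleph.2 (by norm_num)

/-- countable pigeonhole -/
lemma pigeonhole_nat {Γ : Type} (t : ℕ → Set Γ)
    (h : Cardinal.aleph 2 ≤ #(⋃ n, t n)) : ∃ n, Cardinal.aleph 2 ≤ #(t n) := by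
  by_contra hc
  push_neg at hc
  have := (Cardinal.card_iUnion_lt_iff_forall_of_isRegular aleph2_regular
    (by simpa using aleph0_lt_aleph2)).2 hc
  exact absurd h (not_le.2 this)

/-- Lázár free set theorem, bounded-size version, for `ℵ₂`. -/
lemma free_subset_bounded {Γ : Type} (n : ℕ) :
    ∀ (A : Set Γ) (F : Γ → Finset Γ), Cardinal.aleph 2 ≤ #A →
    (∀ α ∈ A, (F α).card ≤ n) →
    ∃ B ⊆ A, Cardinal.aleph 2 ≤ #B ∧ ∀ α ∈ B, ∀ β ∈ B, β ≠ α → β ∉ F α := by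
  haveI := Classical.decEq Γ
  induction n with
  | zero =>
    intro A F hA hF
    refine ⟨A, le_rfl, hA, fun α hα β hβ hne hmem => ?_⟩
    have := hF α hα
    rw [Nat.le_zero, Finset.card_eq_zero] at this
    simp [this] at hmem
  | succ n ih =>
    intro A F hA hF
    by_cases hcase : ∃ a, Cardinal.aleph 2 ≤ #({α | α ∈ A ∧ a ∈ F α} : Set Γ)
    · obtain ⟨a, ha⟩ := hcase
      set S : Set Γ := {α | α ∈ A ∧ a ∈ F α} with hS
      have hA₁ : Cardinal.aleph 2 ≤ #(S \ {a} : Set Γ) := by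
        by_contra hlt
        push_neg at hlt
        have hsub : S ⊆ (S \ {a}) ∪ {a} := by
          intro x hx; by_cases hxa : x = a
          · exact Or.inr (by simp [hxa])
          · exact Or.inl ⟨hx, by simp [hxa]⟩
        have h1 : #(S : Set Γ) ≤ #((S \ {a}) ∪ {a} : Set Γ) := Cardinal.mk_le_mk_of_subset hsub
        have h2 : #(((S \ {a}) ∪ {a}) : Set Γ) ≤ #(S \ {a} : Set Γ) + #({a} : Set Γ) :=
          Cardinal.mk_union_le _ _
        have h3 : #({a} : Set Γ) < Cardinal.aleph 2 := by
          simp only [Cardinal.mk_singleton]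
          exact lt_of_lt_of_le Cardinal.one_lt_aleph0 aleph0_lt_aleph2.le
        have := Cardinal.add_lt_of_lt aleph2_regular.aleph0_le hlt h3
        exact absurd (ha.trans (h1.trans h2)) (not_le.2 this)
      obtain ⟨B, hBsub, hBcard, hBfree⟩ := ih (S \ {a}) (fun α => (F α).erase a) hA₁
        (by
          intro α hα
          have haF : a ∈ F α := hα.1.2
          have := hF α hα.1.1
          rw [Finset.card_erase_of_mem haF]
          omega)
      refine ⟨B, fun x hx => (hBsub hx).1.1, hBcard, fun α hα β hβ hne hmem => ?_⟩
      have hβa : β ≠ a := by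
        intro hba; exact (hBsub hβ).2 (by simp [hba])
      exact hBfree α hα β hβ hne (Finset.mem_erase.2 ⟨hβa, hmem⟩)
    · push_neg at hcase
      -- Zorn
      set 𝒮 : Set (Set Γ) := {B | B ⊆ A ∧ ∀ α ∈ B, ∀ β ∈ B, β ≠ α → β ∉ F α} with h𝒮
      obtain ⟨B, hBmax⟩ := zorn_subset 𝒮 (by
        intro c hc hchain
        refine ⟨⋃₀ c, ⟨?_, ?_⟩, fun s hs => subset_sUnion_of_mem hs⟩
        · intro x hx
          obtain ⟨s, hsc, hxs⟩ := hx
          exact (hc hsc).1 hxs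
        · rintro α ⟨s, hsc, hαs⟩ β ⟨t, htc, hβt⟩ hne
          rcases hchain.total hsc htc with hst | hts
          · exact (hc htc).2 α (hst hαs) β hβt hne
          · exact (hc hsc).2 α hαs β (hts hβt) hne)
      have hBA : B ⊆ A := hBmax.prop.1
      have hBfree := hBmax.prop.2
      refine ⟨B, hBA, ?_, hBfree⟩
      by_contra hB
      push_neg at hB
      set bad : Set Γ := B ∪ (⋃ β ∈ B, ↑(F β)) ∪ (⋃ b ∈ B, {α | α ∈ A ∧ b ∈ F α}) with hbad
      have hbadlt : #bad < Cardinal.aleph 2 := by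
        have h1 : #(⋃ β ∈ B, (↑(F β) : Set Γ)) < Cardinal.aleph 2 := by
          rw [Cardinal.card_biUnion_lt_iff_forall_of_isRegular aleph2_regular hB]
          intro β _
          exact lt_of_lt_of_le ((F β).finite_toSet.lt_aleph0) aleph0_lt_aleph2.le
        have h2 : #(⋃ b ∈ B, {α | α ∈ A ∧ b ∈ F α}) < Cardinal.aleph 2 := by
          rw [Cardinal.card_biUnion_lt_iff_forall_of_isRegular aleph2_regular hB]
          intro b _
          exact hcase b
        calc #bad ≤ #(B ∪ (⋃ β ∈ B, ↑(F β)) : Set Γ) + #(⋃ b ∈ B, {α | α ∈ A ∧ b ∈ F α}) :=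
              Cardinal.mk_union_le _ _
          _ ≤ (#B + #(⋃ β ∈ B, (↑(F β) : Set Γ))) + #(⋃ b ∈ B, {α | α ∈ A ∧ b ∈ F α}) := by
              gcongr
              exact Cardinal.mk_union_le _ _
          _ < Cardinal.aleph 2 := by
              apply Cardinal.add_lt_of_lt aleph2_regular.aleph0_le
              · exact Cardinal.add_lt_of_lt aleph2_regular.aleph0_le hB h1
              · exact h2
      obtain ⟨a, haA, habad⟩ : ∃ a ∈ A, a ∉ bad := by
        by_contra hcon
        push_neg at hcon
        exact absurd (hA.trans (Cardinal.mk_le_mk_of_subset hcon)) (not_le.2 hbadlt)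
      have haB : a ∉ B := fun h => habad (Or.inl (Or.inl h))
      have hnew : insert a B ∈ 𝒮 := by
        constructor
        · exact Set.insert_subset haA hBA
        · intro α hα β hβ hne hmem
          rcases hα with rfl | hα
          · rcases hβ with rfl | hβ
            · exact hne rfl
            · -- β ∈ B, β ∈ F a : then a ∈ third part of bad
              exact habad (Or.inr (Set.mem_biUnion hβ ⟨haA, hmem⟩))
          · rcases hβ with rfl | hβ
            · -- a ∈ F α, α ∈ B : a ∈ second part
              exact habad (Or.inl (Or.inr (Set.mem_biUnion hα hmem)))
            · exact hBfree α hα β hβ hne hmem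
      have := hBmax.2 hnew (Set.subset_insert a B)
      exact haB (this (Set.mem_insert a B))

lemma free_subset {Γ : Type} (A : Set Γ) (F : Γ → Finset Γ)
    (hA : Cardinal.aleph 2 ≤ #A) :
    ∃ B ⊆ A, Cardinal.aleph 2 ≤ #B ∧ ∀ α ∈ B, ∀ β ∈ B, β ≠ α → β ∉ F α := by
  have hcover : A ⊆ ⋃ n : ℕ, {α | α ∈ A ∧ (F α).card = n} := by
    intro x hx; exact Set.mem_iUnion.2 ⟨(F x).card, hx, rfl⟩
  obtain ⟨n, hn⟩ := pigeonhole_nat _ (hA.trans (Cardinal.mk_le_mk_of_subset hcover))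
  obtain ⟨B, hBsub, hBcard, hBfree⟩ := free_subset_bounded n {α | α ∈ A ∧ (F α).card = n} F hn
    (fun α hα => hα.2.le)
  exact ⟨B, fun x hx => (hBsub hx).1, hBcard, hBfree⟩

section C0Norm
variable {Γ : Type} [TopologicalSpace Γ] [DiscreteTopology Γ]

lemma c0_abs_apply_le_norm (g : C₀(Γ, ℝ)) (γ : Γ) : |g γ| ≤ ‖g‖ := by
  rw [← ZeroAtInftyContinuousMap.norm_toBCF_eq_norm]
  exact g.toBCF.norm_coe_le_norm γ

lemma c0_norm_le {g : C₀(Γ, ℝ)} {M : ℝ} (hM : 0 ≤ M) (h : ∀ γ, |g γ| ≤ M) : ‖g‖ ≤ M := by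
  rw [← ZeroAtInftyContinuousMap.norm_toBCF_eq_norm]
  exact (BoundedContinuousFunction.norm_le hM).2 h

lemma c0_finite_large (g : C₀(Γ, ℝ)) {ε : ℝ} (hε : 0 < ε) : {γ | ε ≤ |g γ|}.Finite := by
  have hz : Filter.Tendsto g (cocompact Γ) (nhds 0) := zero_at_infty g
  rw [cocompact_eq_cofinite] at hz
  have hU : Metric.ball (0 : ℝ) ε ∈ nhds (0 : ℝ) := Metric.ball_mem_nhds 0 hε
  have h2 : ((g ⁻¹' Metric.ball 0 ε)ᶜ : Set Γ).Finite := by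
    have := hz hU
    rwa [Filter.mem_map, Filter.mem_cofinite] at this
  refine h2.subset ?_
  intro γ hγ
  simp only [Set.mem_compl_iff, Set.mem_preimage, Metric.mem_ball, dist_zero_right,
    Real.norm_eq_abs, not_lt]
  exact hγ

lemma c0_exists_attain {g : C₀(Γ, ℝ)} (hg : g ≠ 0) : ∃ α, ‖g‖ ≤ |g α| := by
  have hpos : 0 < ‖g‖ := norm_pos_iff.2 hg
  have hfin := c0_finite_large g (half_pos hpos)
  have hne : {γ | ‖g‖ / 2 ≤ |g γ|}.Nonempty := by
    by_contra hemp
    rw [Set.not_nonempty_iff_eq_empty] at hemp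
    have : ‖g‖ ≤ ‖g‖ / 2 := c0_norm_le (by positivity) (fun γ => by
      by_contra hlt
      push_neg at hlt
      exact Set.eq_empty_iff_forall_notMem.1 hemp γ hlt.le)
    linarith
  obtain ⟨α, hα, hmax⟩ := Set.exists_max_image _ (fun γ => |g γ|) hfin hne
  refine ⟨α, c0_norm_le (abs_nonneg _) (fun γ => ?_)⟩
  by_cases hγ : γ ∈ {γ | ‖g‖ / 2 ≤ |g γ|}
  · exact hmax γ hγ
  · have : |g γ| < ‖g‖ / 2 := by simpa [not_le] using hγ
    have h2 : ‖g‖ / 2 ≤ |g α| := hα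
    linarith

lemma c0_smul_apply (t : ℝ) (f : C₀(Γ, ℝ)) (γ : Γ) : (t • f) γ = t * f γ := rfl

lemma c0_sub_apply (f g : C₀(Γ, ℝ)) (γ : Γ) : (f - g) γ = f γ - g γ := rfl

/-- evaluation at a point as an AddMonoidHom, to compute values of finite sums -/
def c0EvalAdd (γ : Γ) : C₀(Γ, ℝ) →+ ℝ where
  toFun g := g γ
  map_zero' := rfl
  map_add' _ _ := rfl

lemma c0_sum_apply {ι : Type*} (s : Finset ι) (v : ι → C₀(Γ, ℝ)) (γ : Γ) :
    (∑ β ∈ s, v β) γ = ∑ β ∈ s, (v β) γ :=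
  map_sum (c0EvalAdd γ) v s

lemma c0Ind_apply_mem {s : Set Γ} (hs : s.Finite) {γ : Γ} (h : γ ∈ s) :
    c0Ind Γ s hs γ = 1 :=
  Set.indicator_of_mem h 1

lemma c0Ind_apply_not_mem {s : Set Γ} (hs : s.Finite) {γ : Γ} (h : γ ∉ s) :
    c0Ind Γ s hs γ = 0 :=
  Set.indicator_of_notMem h 1

end C0Norm

/-- evaluation of `ℓ∞(X)` at a coordinate, as a continuous linear map -/
def lpEval (X : Type) [NormedAddCommGroup X] [NormedSpace ℝ X] (n : ℕ) :
    lp (fun _ : ℕ => X) ⊤ →L[ℝ] X :=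
  LinearMap.mkContinuous
    { toFun := fun x => x n
      map_add' := fun x y => by
        have := lp.coeFn_add x y
        exact congrFun this n
      map_smul' := fun c x => by
        have := lp.coeFn_smul c x
        exact congrFun this n }
    1 (fun x => by simpa using lp.norm_apply_le_norm ENNReal.top_ne_zero x n)

end Aux

set_option maxHeartbeats 2000000 in
/-- If `ℓ∞(X)` contains an isomorphic copy of `c₀(ω₂)` then so does `X`. -/
theorem statement5 (Γ : Type) [TopologicalSpace Γ] [DiscreteTopology Γ]
    (hΓ : Cardinal.mk Γ = Cardinal.aleph 2)
    (X : Type) [NormedAddCommGroup X] [NormedSpace ℝ X] [CompleteSpace X]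
    (h : ∃ T : C₀(Γ, ℝ) →L[ℝ] lp (fun _ : ℕ => X) ⊤,
      ∃ c > (0 : ℝ), ∀ f, c * ‖f‖ ≤ ‖T f‖) :
    ∃ T : C₀(Γ, ℝ) →L[ℝ] X, ∃ c > (0 : ℝ), ∀ f, c * ‖f‖ ≤ ‖T f‖ := by
  classical
  obtain ⟨T, c, hc, hT⟩ := h
  -- the unit vectors of c₀(Γ)
  set e : Γ → C₀(Γ, ℝ) := fun γ => c0Ind Γ {γ} (Set.finite_singleton γ) with he
  have he_self : ∀ γ, e γ γ = 1 := fun γ => c0Ind_apply_mem _ rfl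
  have he_ne : ∀ γ β, β ≠ γ → e γ β = 0 := fun γ β hβ =>
    c0Ind_apply_not_mem _ (by simp [hβ])
  have he_norm : ∀ γ, 1 ≤ ‖e γ‖ := fun γ => by
    have h1 := c0_abs_apply_le_norm (e γ) γ
    rwa [he_self, abs_one] at h1
  have hTe : ∀ γ, c ≤ ‖T (e γ)‖ := fun γ => by
    have := hT (e γ)
    nlinarith [he_norm γ]
  -- for each γ, some coordinate of `T (e γ)` is large
  have hcoord : ∀ γ, ∃ n, c / 2 ≤ ‖(T (e γ)) n‖ := by
    intro γ
    by_contra hcon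
    push_neg at hcon
    have h1 : ‖T (e γ)‖ ≤ c / 2 := by
      rw [lp.norm_eq_ciSup]
      exact ciSup_le fun n => (hcon n).le
    linarith [hTe γ]
  -- pigeonhole: one coordinate works for ℵ₂-many γ
  have hcover : (Set.univ : Set Γ) ⊆ ⋃ n : ℕ, {γ | c / 2 ≤ ‖(T (e γ)) n‖} := by
    intro γ _
    obtain ⟨n, hn⟩ := hcoord γ
    exact Set.mem_iUnion.2 ⟨n, hn⟩
  have hmkuniv : Cardinal.aleph 2 ≤ Cardinal.mk (⋃ n : ℕ, {γ | c / 2 ≤ ‖(T (e γ)) n‖}) := by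
    have h1 : Cardinal.mk (Set.univ : Set Γ) = Cardinal.aleph 2 := by
      rw [Cardinal.mk_univ, hΓ]
    exact h1 ▸ Cardinal.mk_le_mk_of_subset hcover
  obtain ⟨n₀, hn₀⟩ := pigeonhole_nat _ hmkuniv
  set A : Set Γ := {γ | c / 2 ≤ ‖(T (e γ)) n₀‖} with hA
  set S : C₀(Γ, ℝ) →L[ℝ] X := (lpEval X n₀).comp T with hSdef
  have hSe : ∀ α ∈ A, c / 2 ≤ ‖S (e α)‖ := fun α hα => hα
  -- Hahn–Banach functionals
  have hfun : ∀ α, α ∈ A → ∃ ψ : X →L[ℝ] ℝ, ‖ψ‖ = 1 ∧ ψ (S (e α)) = ‖S (e α)‖ := by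
    intro α hα
    apply exists_dual_vector ℝ
    intro h0
    have := hSe α hα
    rw [h0] at this
    linarith
  choose ψ hψ1 hψ2 using hfun
  have hψ_le : ∀ α (hα : α ∈ A) (x : X), |ψ α hα x| ≤ ‖x‖ := by
    intro α hα x
    have := (ψ α hα).le_opNorm x
    rwa [hψ1 α hα, one_mul] at this
  -- finite sums of |μ| are bounded by ‖S‖
  have hsum : ∀ α (hα : α ∈ A) (s : Finset Γ),
      ∑ β ∈ s, |ψ α hα (S (e β))| ≤ ‖S‖ := by
    intro α hα s
    set v : Γ → C₀(Γ, ℝ) :=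
      fun β => (if 0 ≤ ψ α hα (S (e β)) then (1 : ℝ) else -1) • e β with hv
    set w : C₀(Γ, ℝ) := ∑ β ∈ s, v β with hw
    have hw_apply : ∀ γ, |w γ| ≤ 1 := by
      intro γ
      have h1 : w γ = ∑ β ∈ s, (v β) γ := c0_sum_apply s v γ
      have h2 : ∀ β, β ≠ γ → (v β) γ = 0 := by
        intro β hβ
        have h2a : (v β) γ = (if 0 ≤ ψ α hα (S (e β)) then (1 : ℝ) else -1) * (e β) γ :=
          c0_smul_apply _ _ _
        rw [h2a, he_ne β γ (Ne.symm hβ), mul_zero]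
      by_cases hγ : γ ∈ s
      · have h3 : w γ = (v γ) γ := by
          rw [h1]
          exact Finset.sum_eq_single_of_mem γ hγ (fun β _ hβ => h2 β hβ)
        have h4 : (v γ) γ = (if 0 ≤ ψ α hα (S (e γ)) then (1 : ℝ) else -1) := by
          rw [c0_smul_apply, he_self γ, mul_one]
        rw [h3, h4]
        split <;> norm_num
      · have h3 : w γ = 0 := by
          rw [h1]
          exact Finset.sum_eq_zero fun β hβ => h2 β (fun hcon => hγ (hcon ▸ hβ))
        rw [h3]; norm_num
    have hw_norm : ‖w‖ ≤ 1 := c0_norm_le zero_le_one hw_apply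
    have h5 : ψ α hα (S w) = ∑ β ∈ s, |ψ α hα (S (e β))| := by
      have h6 : S w = ∑ β ∈ s, S (v β) := map_sum S v s
      rw [h6, map_sum]
      apply Finset.sum_congr rfl
      intro β _
      have h7 : S (v β) = (if 0 ≤ ψ α hα (S (e β)) then (1 : ℝ) else -1) • S (e β) :=
        S.map_smul _ _
      rw [h7, map_smul, smul_eq_mul]
      split <;> rename_i hsign
      · rw [one_mul, abs_of_nonneg hsign]
      · push_neg at hsign
        rw [neg_one_mul, abs_of_neg hsign]
    calc ∑ β ∈ s, |ψ α hα (S (e β))| = ψ α hα (S w) := h5.symm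
      _ ≤ |ψ α hα (S w)| := le_abs_self _
      _ ≤ ‖S w‖ := hψ_le α hα _
      _ ≤ ‖S‖ * ‖w‖ := S.le_opNorm w
      _ ≤ ‖S‖ := by nlinarith [norm_nonneg S, norm_nonneg w]
  -- tail bound: finite sets outside of which the ℓ¹ mass is small
  have htail : ∀ α (hα : α ∈ A), ∃ G : Finset Γ,
      ∀ s : Finset Γ, (∀ β ∈ s, β ∉ G) → ∑ β ∈ s, |ψ α hα (S (e β))| ≤ c / 4 := by
    intro α hα
    set D : Set ℝ := Set.range (fun s : Finset Γ => ∑ β ∈ s, |ψ α hα (S (e β))|) with hD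
    have hDne : D.Nonempty := ⟨0, ⟨∅, by simp⟩⟩
    have hDbdd : BddAbove D := by
      refine ⟨‖S‖, ?_⟩
      rintro x ⟨s, rfl⟩
      exact hsum α hα s
    have hlt : sSup D - c / 8 < sSup D := by linarith
    obtain ⟨x, ⟨G, rfl⟩, hx⟩ := exists_lt_of_lt_csSup hDne hlt
    refine ⟨G, fun s hs => ?_⟩
    have hdisj : Disjoint s G := by
      rw [Finset.disjoint_left]
      exact fun a ha => hs a ha
    have h1 : ∑ β ∈ s ∪ G, |ψ α hα (S (e β))| ≤ sSup D :=
      le_csSup hDbdd ⟨s ∪ G, rfl⟩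
    rw [Finset.sum_union hdisj] at h1
    linarith
  choose Fs hFs using htail
  set F : Γ → Finset Γ := fun α => if hα : α ∈ A then Fs α hα else ∅ with hF
  -- the free set
  obtain ⟨B, hBA, hBcard, hBfree⟩ := free_subset A F hn₀
  -- a bijection Γ ≃ B
  have hBmk : Cardinal.mk Γ = Cardinal.mk B := by
    refine le_antisymm ?_ ?_
    · rw [hΓ]; exact hBcard
    · rw [hΓ]; exact hΓ ▸ Cardinal.mk_set_le B
  obtain ⟨u⟩ : Nonempty (Γ ≃ B) := Cardinal.eq.1 hBmk
  -- the reindexing operator J : c₀(Γ) → c₀(Γ) with range the functions supported on B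
  set Jfun : C₀(Γ, ℝ) → C₀(Γ, ℝ) := fun f =>
    { toFun := fun γ => if h : γ ∈ B then f ((u.symm ⟨γ, h⟩ : Γ)) else 0
      continuous_toFun := continuous_of_discreteTopology
      zero_at_infty' := by
        rw [cocompact_eq_cofinite, Filter.tendsto_def]
        intro U hU
        rw [Filter.mem_cofinite]
        have hf : Filter.Tendsto f cofinite (nhds 0) := by
          rw [← cocompact_eq_cofinite]; exact zero_at_infty f
        have hfin : ((f ⁻¹' U)ᶜ : Set Γ).Finite := by
          have := Filter.tendsto_def.1 hf U hU
          rwa [Filter.mem_cofinite] at this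
        refine ((hfin.image (fun δ => (u δ : Γ))).subset ?_)
        intro γ hγ
        simp only [Set.mem_compl_iff, Set.mem_preimage] at hγ
        by_cases hB : γ ∈ B
        · rw [dif_pos hB] at hγ
          refine ⟨u.symm ⟨γ, hB⟩, hγ, ?_⟩
          simp
        · rw [dif_neg hB] at hγ
          exact absurd (mem_of_mem_nhds hU) hγ } with hJfun
  have hJfun_apply : ∀ f γ, (Jfun f) γ = if h : γ ∈ B then f ((u.symm ⟨γ, h⟩ : Γ)) else 0 :=
    fun f γ => rfl
  set J : C₀(Γ, ℝ) →L[ℝ] C₀(Γ, ℝ) := LinearMap.mkContinuous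
    { toFun := Jfun
      map_add' := by
        intro f₁ f₂
        ext γ
        simp only [hJfun_apply, ZeroAtInftyContinuousMap.coe_add, Pi.add_apply]
        split <;> simp
      map_smul' := by
        intro m f₁
        ext γ
        simp only [hJfun_apply, ZeroAtInftyContinuousMap.coe_smul, Pi.smul_apply,
          RingHom.id_apply, smul_eq_mul]
        split <;> simp }
    1 (fun f => by
      rw [one_mul]
      show ‖Jfun f‖ ≤ ‖f‖
      refine c0_norm_le (norm_nonneg f) fun γ => ?_
      rw [hJfun_apply]
      split
      · exact c0_abs_apply_le_norm f _
      · simpa using norm_nonneg f) with hJ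
  have hJ_apply : ∀ f γ, (J f) γ = if h : γ ∈ B then f ((u.symm ⟨γ, h⟩ : Γ)) else 0 :=
    fun f γ => rfl
  refine ⟨S.comp J, c / 4, by linarith, ?_⟩
  intro f
  rw [ContinuousLinearMap.comp_apply]
  by_cases hf0 : f = 0
  · simp [hf0]
  -- ‖f‖ ≤ ‖J f‖
  have hJval : ∀ δ : Γ, (J f) ((u δ : Γ)) = f δ := by
    intro δ
    rw [hJ_apply, dif_pos (u δ).2]
    congr
    simp
  have hnorm_le : ‖f‖ ≤ ‖J f‖ := by
    refine c0_norm_le (norm_nonneg _) fun δ => ?_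
    rw [← hJval δ]
    exact c0_abs_apply_le_norm _ _
  have hg0 : J f ≠ 0 := by
    intro h0
    rw [h0, norm_zero] at hnorm_le
    exact hf0 (norm_le_zero_iff.1 hnorm_le)
  obtain ⟨α, hαatt⟩ := c0_exists_attain hg0
  have hJfpos : 0 < ‖J f‖ := norm_pos_iff.2 hg0
  have hgα0 : (J f) α ≠ 0 := by
    intro h0
    rw [h0, abs_zero] at hαatt
    linarith
  have hαB : α ∈ B := by
    by_contra hcon
    exact hgα0 (by rw [hJ_apply, dif_neg hcon])
  have hαA : α ∈ A := hBA hαB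
  set μ : Γ → ℝ := fun β => ψ α hαA (S (e β)) with hμ
  have hμα : c / 2 ≤ μ α := by
    have h1 := hSe α hαA
    rw [← hψ2 α hαA] at h1
    exact h1
  -- the part of J f away from α
  set h₀ : C₀(Γ, ℝ) := J f - (J f) α • e α with hh₀
  have hh₀_apply : ∀ γ, h₀ γ = (J f) γ - (J f) α * (e α) γ := fun γ => rfl
  have hh₀α : h₀ α = 0 := by rw [hh₀_apply, he_self]; ring
  have hh₀ne : ∀ γ, γ ≠ α → h₀ γ = (J f) γ := by
    intro γ hγ
    rw [hh₀_apply, he_ne α γ hγ, mul_zero, sub_zero]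
  have hh₀norm : ‖h₀‖ ≤ ‖J f‖ := by
    refine c0_norm_le (norm_nonneg _) fun γ => ?_
    by_cases hγ : γ = α
    · rw [hγ, hh₀α, abs_zero]; exact norm_nonneg _
    · rw [hh₀ne γ hγ]; exact c0_abs_apply_le_norm _ _
  have hh₀supp : ∀ γ, h₀ γ ≠ 0 → γ ∈ B ∧ γ ≠ α := by
    intro γ hγ
    have hγα : γ ≠ α := fun hcon => hγ (hcon ▸ hh₀α)
    refine ⟨?_, hγα⟩
    by_contra hcon
    rw [hh₀ne γ hγα, hJ_apply, dif_neg hcon] at hγ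
    exact hγ rfl
  -- key tail estimate
  have hkey : |ψ α hαA (S h₀)| ≤ c / 4 * ‖J f‖ := by
    refine le_of_forall_pos_le_add fun ε hε => ?_
    set ε' : ℝ := ε / (‖S‖ + 1) with hε'
    have hε'pos : 0 < ε' := by positivity
    set t : Finset Γ := (c0_finite_large h₀ hε'pos).toFinset with ht
    set w : C₀(Γ, ℝ) := ∑ β ∈ t, h₀ β • e β with hw
    have hw_apply : ∀ γ, w γ = if γ ∈ t then h₀ γ else 0 := by
      intro γ
      have h1 : w γ = ∑ β ∈ t, (h₀ β • e β) γ := c0_sum_apply t _ γ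
      have h2 : ∀ β, β ≠ γ → (h₀ β • e β) γ = 0 := by
        intro β hβ
        rw [c0_smul_apply, he_ne β γ (Ne.symm hβ), mul_zero]
      by_cases hγ : γ ∈ t
      · rw [if_pos hγ, h1, Finset.sum_eq_single_of_mem γ hγ (fun β _ hβ => h2 β hβ),
          c0_smul_apply, he_self γ, mul_one]
      · rw [if_neg hγ, h1]
        exact Finset.sum_eq_zero fun β hβ => h2 β (fun hcon => hγ (hcon ▸ hβ))
    have htrunc : ‖h₀ - w‖ ≤ ε' := by
      refine c0_norm_le hε'pos.le fun γ => ?_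
      rw [c0_sub_apply, hw_apply]
      by_cases hγ : γ ∈ t
      · rw [if_pos hγ]; simpa using hε'pos.le
      · rw [if_neg hγ, sub_zero]
        rw [ht, Set.Finite.mem_toFinset] at hγ
        simp only [Set.mem_setOf_eq, not_le] at hγ
        exact hγ.le
    -- the truncated part
    have hmain : |ψ α hαA (S w)| ≤ c / 4 * ‖J f‖ := by
      have h1 : ψ α hαA (S w) = ∑ β ∈ t, h₀ β * μ β := by
        rw [hw, map_sum, map_sum]
        apply Finset.sum_congr rfl
        intro β _
        rw [map_smul, map_smul, smul_eq_mul]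
      set t' : Finset Γ := t.filter (fun β => h₀ β ≠ 0) with ht'
      have h2 : ∑ β ∈ t, h₀ β * μ β = ∑ β ∈ t', h₀ β * μ β := by
        rw [ht']
        exact (Finset.sum_filter_of_ne (fun β _ hβ => by
          intro h0
          exact hβ (by rw [h0, zero_mul]))).symm
      have h3 : ∀ β ∈ t', β ∉ F α := by
        intro β hβ
        rw [ht', Finset.mem_filter] at hβ
        obtain ⟨hβB, hβα⟩ := hh₀supp β hβ.2
        exact hBfree α hαB β hβB hβα
      have h4 : ∑ β ∈ t', |μ β| ≤ c / 4 := by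
        have h6 : F α = Fs α hαA := dif_pos hαA
        exact hFs α hαA t' (fun β hβ => by
          have h5 := h3 β hβ
          rwa [h6] at h5)
      calc |ψ α hαA (S w)| = |∑ β ∈ t', h₀ β * μ β| := by rw [h1, h2]
        _ ≤ ∑ β ∈ t', |h₀ β * μ β| := Finset.abs_sum_le_sum_abs _ _
        _ = ∑ β ∈ t', |h₀ β| * |μ β| := by
            apply Finset.sum_congr rfl
            intro β _
            rw [abs_mul]
        _ ≤ ∑ β ∈ t', ‖J f‖ * |μ β| := by
            apply Finset.sum_le_sum
            intro β _
            have h6 : |h₀ β| ≤ ‖J f‖ := (c0_abs_apply_le_norm h₀ β).trans hh₀norm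
            exact mul_le_mul_of_nonneg_right h6 (abs_nonneg _)
        _ = ‖J f‖ * ∑ β ∈ t', |μ β| := by rw [Finset.mul_sum]
        _ ≤ ‖J f‖ * (c / 4) := by
            exact mul_le_mul_of_nonneg_left h4 (norm_nonneg _)
        _ = c / 4 * ‖J f‖ := by ring
    have herr : |ψ α hαA (S (h₀ - w))| ≤ ε := by
      calc |ψ α hαA (S (h₀ - w))| ≤ ‖S (h₀ - w)‖ := hψ_le α hαA _
        _ ≤ ‖S‖ * ‖h₀ - w‖ := S.le_opNorm _
        _ ≤ ‖S‖ * ε' := mul_le_mul_of_nonneg_left htrunc (norm_nonneg S)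
        _ ≤ ε := by
            have hS1 : (0:ℝ) < ‖S‖ + 1 := by positivity
            have h7 : (‖S‖ + 1) * ε' = ε := by
              rw [hε', mul_div_cancel₀ _ (ne_of_gt hS1)]
            nlinarith [hε'pos.le, norm_nonneg S]
    calc |ψ α hαA (S h₀)| = |ψ α hαA (S w) + ψ α hαA (S (h₀ - w))| := by
          have h8 : w + (h₀ - w) = h₀ := by abel
          rw [← map_add, ← map_add, h8]
      _ ≤ |ψ α hαA (S w)| + |ψ α hαA (S (h₀ - w))| := abs_add_le _ _
      _ ≤ c / 4 * ‖J f‖ + ε := add_le_add hmain herr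
  -- conclude
  have hsplit : ψ α hαA (S (J f)) = (J f) α * μ α + ψ α hαA (S h₀) := by
    have h1 : J f = (J f) α • e α + h₀ := by rw [hh₀]; abel
    have h2 : S (J f) = (J f) α • S (e α) + S h₀ := by
      rw [← map_smul, ← map_add, ← h1]
    rw [h2, map_add, map_smul, smul_eq_mul]
  have hlower : c / 4 * ‖J f‖ ≤ |ψ α hαA (S (J f))| := by
    rw [hsplit]
    have h1 : |(J f) α * μ α| = |(J f) α| * μ α := by
      rw [abs_mul, abs_of_nonneg (by linarith : (0:ℝ) ≤ μ α)]
    have h2 : ‖J f‖ * (c / 2) ≤ |(J f) α| * μ α := by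
      apply mul_le_mul hαatt hμα (by linarith) (abs_nonneg _)
    have h3 := abs_add_le ((J f) α * μ α + ψ α hαA (S h₀)) (-(ψ α hαA (S h₀)))
    have h4 : |(J f) α * μ α| ≤ |(J f) α * μ α + ψ α hαA (S h₀)| + |ψ α hαA (S h₀)| := by
      simpa using h3
    rw [h1] at h4
    nlinarith [hkey]
  calc c / 4 * ‖f‖ ≤ c / 4 * ‖J f‖ := by nlinarith
    _ ≤ |ψ α hαA (S (J f))| := hlower
    _ ≤ ‖S (J f)‖ := hψ_le α hαA _
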